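/- For a fixed vertex set V with distinguished root r and a fixed partition P of V \ {r} into non-empty parts, the P-admissible maps g : V → V are in one-to-one correspondence with the r-rooted hypertrees having vertex set V and Prüfer partition P. -/

import Mathlib

open Finset

/-- Degree of a vertex: number of hyperedges containing it. -/
def hdeg (E : Finset (Finset ℕ)) (v : ℕ) : ℕ := (E.filter (fun e => v ∈ e)).card

/-- Two vertices are adjacent if they are distinct and lie in a common hyperedge. -/
def HAdj (E : Finset (Finset ℕ)) (v w : ℕ) : Prop := v ≠ w ∧ ∃ e ∈ E, v ∈ e ∧ w ∈ e

/-- A hypergraph is connected if any two vertices are joined by a path of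
consecutively adjacent vertices. -/
def HConnected (V : Finset ℕ) (E : Finset (Finset ℕ)) : Prop :=
  ∀ v ∈ V, ∀ w ∈ V, Relation.ReflTransGen (HAdj E) v w

/-- A (finite) hypergraph on vertex set `V`: hyperedges are subsets of `V`
of cardinality at least 2. -/
def IsHypergraph (V : Finset ℕ) (E : Finset (Finset ℕ)) : Prop :=
  ∀ e ∈ E, e ⊆ V ∧ 2 ≤ e.card

/-- A finite hypertree: a connected hypergraph with
`∑ size(e) = |V| + |E| - 1`. -/
def IsHypertree (V : Finset ℕ) (E : Finset (Finset ℕ)) : Prop :=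
  IsHypergraph V E ∧ HConnected V E ∧ (∑ e ∈ E, e.card) + 1 = V.card + E.card

/-- There is a walk of length `l` from `v` to `w`. -/
def HJoined (E : Finset (Finset ℕ)) (l : ℕ) (v w : ℕ) : Prop :=
  ∃ p : ℕ → ℕ, p 0 = v ∧ p l = w ∧ ∀ i < l, HAdj E (p i) (p (i + 1))

/-- Distance between two vertices: length of a shortest joining path. -/
noncomputable def hdist (E : Finset (Finset ℕ)) (v w : ℕ) : ℕ :=
  sInf {l | HJoined E l v w}

/-- `v` is the marked vertex of the hyperedge `e` of an `r`-rooted hypertree: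
the vertex of `e` closest to the root `r`. -/
def IsMarked (E : Finset (Finset ℕ)) (r : ℕ) (e : Finset ℕ) (v : ℕ) : Prop :=
  v ∈ e ∧ ∀ w ∈ e, hdist E r v ≤ hdist E r w

/-- `P` is a partition of the finite set `S` into non-empty parts. -/
def IsPartitionOf (S : Finset ℕ) (P : Finset (Finset ℕ)) : Prop :=
  (∀ s ∈ P, s.Nonempty) ∧ (∀ s ∈ P, ∀ t ∈ P, s ≠ t → Disjoint s t) ∧
    P.biUnion id = S

/-- A `P`-admissible map: a self-map of `V` (extended by the identity outside
`V`) fixing `r`, constant on each part of `P`, under whose iteration every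
vertex reaches the fix-point `r`. -/
def Admissible (V : Finset ℕ) (r : ℕ) (P : Finset (Finset ℕ))
    (g : ℕ → ℕ) : Prop :=
  g r = r ∧ (∀ v ∈ V, g v ∈ V) ∧ (∀ v, v ∉ V → g v = v) ∧
    (∀ s ∈ P, ∀ v ∈ s, ∀ w ∈ s, g v = g w) ∧
    ∀ v ∈ V, ∃ k : ℕ, g^[k] v = r

/-- The hypertree `E` is `r`-rooted with vertex set `V` and has Prüfer
partition `P` (given by its reduced hyperedges). -/
def HasPruferPartition (V : Finset ℕ) (r : ℕ) (E : Finset (Finset ℕ))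
    (P : Finset (Finset ℕ)) : Prop :=
  IsHypertree V E ∧ ∃ m : Finset ℕ → ℕ, (∀ e ∈ E, IsMarked E r e (m e)) ∧
    P = E.image (fun e => e.erase (m e)) ∧
    Set.InjOn (fun e : Finset ℕ => e.erase (m e)) ↑E

/-- `g` is the glue map of the rooted hypertree `E`. -/
def GlueRel (E : Finset (Finset ℕ)) (r : ℕ) (g : ℕ → ℕ) : Prop :=
  ∃ m : Finset ℕ → ℕ, (∀ e ∈ E, IsMarked E r e (m e)) ∧
    ∀ e ∈ E, ∀ v ∈ e.erase (m e), g v = m e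

section WalkLemmas

variable {E : Finset (Finset ℕ)} {r v w : ℕ}

lemma hadj_symm (h : HAdj E v w) : HAdj E w v :=
  ⟨h.1.symm, h.2.imp fun e ⟨he, h1, h2⟩ => ⟨he, h2, h1⟩⟩

lemma hjoined_succ {l u : ℕ} (h : HJoined E l v u) (ha : HAdj E u w) :
    HJoined E (l + 1) v w := by
  obtain ⟨p, h0, hl, hs⟩ := h
  refine ⟨fun i => if i ≤ l then p i else w, by simp [h0], by simp, ?_⟩
  intro i hi
  rcases lt_or_eq_of_le (Nat.lt_succ_iff.mp hi) with hi' | hi'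
  · simpa [Nat.le_of_lt hi', Nat.succ_le_of_lt hi'] using hs i hi'
  · subst hi'; simpa [hl] using ha

lemma reaches (hc : HConnected V E) (hr : r ∈ V) (hw : w ∈ V) :
    ∃ l, HJoined E l r w := by
  have h := hc r hr w hw
  clear hw
  induction h with
  | refl => exact ⟨0, fun _ => r, rfl, rfl, by omega⟩
  | tail _ ha ih => obtain ⟨l, hl⟩ := ih; exact ⟨l + 1, hjoined_succ hl ha⟩

lemma hdist_self : hdist E r r = 0 :=
  Nat.le_zero.mp (Nat.sInf_le ⟨fun _ => r, rfl, rfl, by omega⟩)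

lemma hjoined_hdist (h : ∃ l, HJoined E l r w) : HJoined E (hdist E r w) r w :=
  Nat.sInf_mem h

lemma hdist_le {l : ℕ} (h : HJoined E l r w) : hdist E r w ≤ l := Nat.sInf_le h

lemma eq_of_hdist_zero (h : ∃ l, HJoined E l r w) (h0 : hdist E r w = 0) :
    w = r := by
  have := hjoined_hdist h
  rw [h0] at this
  obtain ⟨p, h1, h2, -⟩ := this
  rw [← h2, h1]

/-- From any non-root vertex there is an edge containing it together with a
vertex strictly closer to the root. -/
lemma step_down {V : Finset ℕ} (hc : HConnected V E) (hr : r ∈ V) (hv : v ∈ V)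
    (hvr : v ≠ r) : ∃ e ∈ E, v ∈ e ∧ ∃ u ∈ e, hdist E r u < hdist E r v := by
  have hne : ∃ l, HJoined E l r v := reaches hc hr hv
  have hj := hjoined_hdist hne
  set d := hdist E r v with hd
  have hdpos : d ≠ 0 := fun h0 => hvr (eq_of_hdist_zero hne h0)
  obtain ⟨p, h0, hl, hs⟩ := hj
  have hadj : HAdj E (p (d - 1)) (p d) := by
    have := hs (d - 1) (by omega)
    rwa [Nat.sub_add_cancel (by omega)] at this
  obtain ⟨-, e, he, h1, h2⟩ := hadj
  refine ⟨e, he, by rwa [hl] at h2, p (d - 1), h1, ?_⟩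
  have : hdist E r (p (d - 1)) ≤ d - 1 :=
    hdist_le ⟨p, h0, rfl, fun i hi => hs i (by omega)⟩
  omega

end WalkLemmas
section Counting

variable {V : Finset ℕ} {E : Finset (Finset ℕ)} {r : ℕ} {m : Finset ℕ → ℕ}

lemma reduce_subset (hT : IsHypertree V E) (hr : r ∈ V)
    (hm : ∀ e ∈ E, IsMarked E r e (m e)) :
    ∀ e ∈ E, e.erase (m e) ⊆ V.erase r := by
  intro e he v hv
  obtain ⟨hvm, hve⟩ := Finset.mem_erase.mp hv
  have hveV : v ∈ V := (hT.1 e he).1 hve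
  refine Finset.mem_erase.mpr ⟨?_, hveV⟩
  intro hvr
  subst hvr
  have h1 : hdist E v (m e) ≤ hdist E v v := (hm e he).2 v hve
  rw [hdist_self] at h1
  have hme : m e ∈ V := (hT.1 e he).1 (hm e he).1
  have : m e = v := eq_of_hdist_zero (reaches hT.2.1 hr hme) (Nat.le_zero.mp h1)
  exact hvm this.symm

lemma reduce_cover (hT : IsHypertree V E) (hr : r ∈ V)
    (hm : ∀ e ∈ E, IsMarked E r e (m e)) :
    ∀ v ∈ V.erase r, ∃ e ∈ E, v ∈ e.erase (m e) := by
  intro v hv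
  obtain ⟨hvr, hvV⟩ := Finset.mem_erase.mp hv
  obtain ⟨e, he, hve, u, hue, hu⟩ := step_down hT.2.1 hr hvV hvr
  refine ⟨e, he, Finset.mem_erase.mpr ⟨?_, hve⟩⟩
  rintro rfl
  exact absurd ((hm e he).2 u hue) (by omega)

lemma reduce_card (hm : ∀ e ∈ E, IsMarked E r e (m e)) :
    ∀ e ∈ E, (e.erase (m e)).card = e.card - 1 := fun e he =>
  Finset.card_erase_of_mem (hm e he).1

lemma sum_reduce_card (hT : IsHypertree V E) (hr : r ∈ V)
    (hm : ∀ e ∈ E, IsMarked E r e (m e)) :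
    ∑ e ∈ E, (e.erase (m e)).card = (V.erase r).card := by
  have h2 : ∀ e ∈ E, 2 ≤ e.card := fun e he => (hT.1 e he).2
  have h3 : ∑ e ∈ E, (e.erase (m e)).card = ∑ e ∈ E, (e.card - 1) :=
    Finset.sum_congr rfl (reduce_card hm)
  have h4 : ∑ e ∈ E, (e.card - 1 + 1) = ∑ e ∈ E, e.card :=
    Finset.sum_congr rfl fun e he => Nat.sub_add_cancel (by have := h2 e he; omega)
  rw [Finset.sum_add_distrib, Finset.sum_const, smul_eq_mul, mul_one] at h4
  have h5 := hT.2.2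
  have h6 : (V.erase r).card = V.card - 1 := Finset.card_erase_of_mem hr
  have h7 : 1 ≤ V.card := Finset.card_pos.mpr ⟨r, hr⟩
  omega

end Counting
section Unique

variable {V : Finset ℕ} {E : Finset (Finset ℕ)} {r : ℕ} {m : Finset ℕ → ℕ}

lemma reduce_exactly_one (hT : IsHypertree V E) (hr : r ∈ V)
    (hm : ∀ e ∈ E, IsMarked E r e (m e)) :
    ∀ v ∈ V.erase r, (E.filter fun e => v ∈ e.erase (m e)).card = 1 := by
  have key : ∑ v ∈ V.erase r, (E.filter fun e => v ∈ e.erase (m e)).card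
      = (V.erase r).card := by
    have h1 : ∀ e ∈ E, (e.erase (m e)).card
        = ∑ v ∈ V.erase r, if v ∈ e.erase (m e) then 1 else 0 := by
      intro e he
      rw [← Finset.card_filter, Finset.filter_mem_eq_inter,
        Finset.inter_eq_right.mpr (reduce_subset hT hr hm e he)]
    calc ∑ v ∈ V.erase r, (E.filter fun e => v ∈ e.erase (m e)).card
        = ∑ v ∈ V.erase r, ∑ e ∈ E, if v ∈ e.erase (m e) then 1 else 0 := by
          refine Finset.sum_congr rfl fun v _ => ?_
          rw [Finset.card_filter]
      _ = ∑ e ∈ E, ∑ v ∈ V.erase r, if v ∈ e.erase (m e) then 1 else 0 :=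
          Finset.sum_comm
      _ = ∑ e ∈ E, (e.erase (m e)).card :=
          Finset.sum_congr rfl fun e he => (h1 e he).symm
      _ = (V.erase r).card := sum_reduce_card hT hr hm
  have hge : ∀ v ∈ V.erase r, 1 ≤ (E.filter fun e => v ∈ e.erase (m e)).card := by
    intro v hv
    obtain ⟨e, he, hve⟩ := reduce_cover hT hr hm v hv
    exact Finset.card_pos.mpr ⟨e, Finset.mem_filter.mpr ⟨he, hve⟩⟩
  by_contra h
  push_neg at h
  obtain ⟨v, hv, hne⟩ := h
  have hlt : (1 : ℕ) < (E.filter fun e => v ∈ e.erase (m e)).card := by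
    have := hge v hv; omega
  have := Finset.sum_lt_sum hge ⟨v, hv, hlt⟩
  rw [Finset.sum_const, smul_eq_mul, mul_one, key] at this
  omega

lemma reduce_unique (hT : IsHypertree V E) (hr : r ∈ V)
    (hm : ∀ e ∈ E, IsMarked E r e (m e)) {v : ℕ} {e e' : Finset ℕ}
    (he : e ∈ E) (he' : e' ∈ E) (hv : v ∈ e.erase (m e))
    (hv' : v ∈ e'.erase (m e')) : e = e' := by
  have hvV : v ∈ V.erase r := reduce_subset hT hr hm e he hv
  have h1 := reduce_exactly_one hT hr hm v hvV
  exact Finset.card_le_one.mp (le_of_eq h1) e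
    (Finset.mem_filter.mpr ⟨he, hv⟩) e' (Finset.mem_filter.mpr ⟨he', hv'⟩)

lemma marked_strict (hT : IsHypertree V E) (hr : r ∈ V)
    (hm : ∀ e ∈ E, IsMarked E r e (m e)) {e : Finset ℕ} (he : e ∈ E) {v : ℕ}
    (hv : v ∈ e.erase (m e)) : hdist E r (m e) < hdist E r v := by
  have hvV := reduce_subset hT hr hm e he hv
  obtain ⟨hvr, hvV'⟩ := Finset.mem_erase.mp hvV
  obtain ⟨e', he', hve', u, hu, hlt⟩ := step_down hT.2.1 hr hvV' hvr
  have hmu : hdist E r (m e') ≤ hdist E r u := (hm e' he').2 u hu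
  have hv' : v ∈ e'.erase (m e') := by
    refine Finset.mem_erase.mpr ⟨?_, hve'⟩
    rintro rfl
    omega
  have := reduce_unique hT hr hm he he' hv hv'
  subst this
  omega

lemma marked_uniq (hT : IsHypertree V E) (hr : r ∈ V)
    (hm : ∀ e ∈ E, IsMarked E r e (m e)) {e : Finset ℕ} (he : e ∈ E) {u : ℕ}
    (hu : IsMarked E r e u) : u = m e := by
  by_contra hne
  have h1 : u ∈ e.erase (m e) := Finset.mem_erase.mpr ⟨hne, hu.1⟩
  have h2 := marked_strict hT hr hm he h1
  have h3 := hu.2 (m e) (hm e he).1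
  omega

end Unique
noncomputable def markOf (E : Finset (Finset ℕ)) (r : ℕ) (e : Finset ℕ) : ℕ :=
  if h : e.Nonempty then (Finset.exists_min_image e (hdist E r) h).choose else 0

lemma markOf_isMarked {E : Finset (Finset ℕ)} {r : ℕ} {e : Finset ℕ}
    (h : e.Nonempty) : IsMarked E r e (markOf E r e) := by
  rw [markOf, dif_pos h]
  obtain ⟨h1, h2⟩ := (Finset.exists_min_image e (hdist E r) h).choose_spec
  exact ⟨h1, h2⟩

noncomputable def steps (g : ℕ → ℕ) (r v : ℕ) : ℕ :=
  sInf {n | g^[n] v = r}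

def eOf (g : ℕ → ℕ) (s : Finset ℕ) : Finset ℕ := s ∪ s.image g

section Forward

variable {V : Finset ℕ} {r : ℕ} {P : Finset (Finset ℕ)} {g : ℕ → ℕ}
  {s t : Finset ℕ} {v w x : ℕ}

lemma part_sub (hP : IsPartitionOf (V.erase r) P) (hs : s ∈ P) :
    s ⊆ V.erase r := by
  rw [← hP.2.2]
  exact Finset.subset_biUnion_of_mem id hs

lemma g_ne_self (hg : Admissible V r P g) (hv : v ∈ V) (hvr : v ≠ r) :
    g v ≠ v := by
  intro hfix
  obtain ⟨k, hk⟩ := hg.2.2.2.2 v hv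
  rw [Function.iterate_fixed hfix] at hk
  exact hvr hk

lemma steps_root (hg : Admissible V r P g) : steps g r r = 0 :=
  Nat.le_zero.mp (Nat.sInf_le rfl)

lemma steps_spec (hg : Admissible V r P g) (hv : v ∈ V) :
    g^[steps g r v] v = r :=
  Nat.sInf_mem (hg.2.2.2.2 v hv)

lemma steps_pos (hg : Admissible V r P g) (hv : v ∈ V) (hvr : v ≠ r) :
    1 ≤ steps g r v := by
  rcases Nat.eq_zero_or_pos (steps g r v) with h | h
  · have h2 := steps_spec hg hv
    rw [h] at h2
    simp only [Function.iterate_zero_apply] at h2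
    exact absurd h2 hvr
  · exact h

lemma steps_succ (hg : Admissible V r P g) (hv : v ∈ V) (hvr : v ≠ r) :
    steps g r (g v) + 1 = steps g r v := by
  have hk := steps_spec hg hv
  have hk0 : 1 ≤ steps g r v := steps_pos hg hv hvr
  have h1 : steps g r (g v) ≤ steps g r v - 1 := by
    apply Nat.sInf_le
    show g^[steps g r v - 1] (g v) = r
    rw [← Function.iterate_succ_apply, Nat.succ_eq_add_one,
      Nat.sub_add_cancel (by omega)]
    exact hk
  have h2 : steps g r v ≤ steps g r (g v) + 1 := by
    apply Nat.sInf_le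
    show g^[steps g r (g v) + 1] v = r
    rw [Function.iterate_succ_apply]
    exact steps_spec hg (hg.2.1 v hv)
  omega

lemma mem_part_ne_root (hP : IsPartitionOf (V.erase r) P) (hs : s ∈ P)
    (hx : x ∈ s) : x ∈ V ∧ x ≠ r := by
  have := part_sub hP hs hx
  exact ⟨(Finset.mem_erase.mp this).2, (Finset.mem_erase.mp this).1⟩

lemma g_not_mem_part (hg : Admissible V r P g) (hP : IsPartitionOf (V.erase r) P)
    (hs : s ∈ P) (hx : x ∈ s) : g x ∉ s := by
  intro hgx
  have h1 : g (g x) = g x := hg.2.2.2.1 s hs (g x) hgx x hx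
  obtain ⟨hgV, hgr⟩ := mem_part_ne_root hP hs hgx
  exact g_ne_self hg hgV hgr h1

lemma eOf_insert (hg : Admissible V r P g) (hs : s ∈ P) (hx : x ∈ s) :
    eOf g s = insert (g x) s := by
  ext y
  simp only [eOf, Finset.mem_union, Finset.mem_image, Finset.mem_insert]
  constructor
  · rintro (hy | ⟨z, hz, rfl⟩)
    · exact Or.inr hy
    · exact Or.inl (hg.2.2.2.1 s hs z hz x hx)
  · rintro (rfl | hy)
    · exact Or.inr ⟨x, hx, rfl⟩
    · exact Or.inl hy

lemma reduce_eOf (hg : Admissible V r P g) (hP : IsPartitionOf (V.erase r) P)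
    (hs : s ∈ P) (hx : x ∈ s) : (eOf g s).erase (g x) = s := by
  rw [eOf_insert hg hs hx, Finset.erase_insert (g_not_mem_part hg hP hs hx)]

lemma eOf_card (hg : Admissible V r P g) (hP : IsPartitionOf (V.erase r) P)
    (hs : s ∈ P) (hx : x ∈ s) : (eOf g s).card = s.card + 1 := by
  rw [eOf_insert hg hs hx, Finset.card_insert_of_notMem (g_not_mem_part hg hP hs hx)]

lemma eOf_subset_V (hg : Admissible V r P g) (hP : IsPartitionOf (V.erase r) P)
    (hs : s ∈ P) : eOf g s ⊆ V := by
  intro y hy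
  rcases Finset.mem_union.mp hy with hy | hy
  · exact (mem_part_ne_root hP hs hy).1
  · obtain ⟨z, hz, rfl⟩ := Finset.mem_image.mp hy
    exact hg.2.1 z (mem_part_ne_root hP hs hz).1

lemma mem_V_cases (hP : IsPartitionOf (V.erase r) P) (hv : v ∈ V) :
    v = r ∨ ∃ s ∈ P, v ∈ s := by
  by_cases hvr : v = r
  · exact Or.inl hvr
  · right
    have : v ∈ P.biUnion id := hP.2.2.symm ▸ Finset.mem_erase.mpr ⟨hvr, hv⟩
    simpa using Finset.mem_biUnion.mp this

lemma eOf_inj (hg : Admissible V r P g) (hP : IsPartitionOf (V.erase r) P) :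
    ∀ s ∈ P, ∀ t ∈ P, eOf g s = eOf g t → s = t := by
  intro s hs t ht heq
  by_contra hne
  have hdisj := hP.2.1 s hs t ht hne
  obtain ⟨x, hx⟩ := hP.1 s hs
  obtain ⟨y, hy⟩ := hP.1 t ht
  have hxt : x ∉ t := Finset.disjoint_left.mp hdisj hx
  have hys : y ∉ s := Finset.disjoint_left.mp hdisj.symm hy
  have hx' : x ∈ insert (g y) t := by
    rw [← eOf_insert hg ht hy, ← heq]; exact Finset.mem_union_left _ hx
  have hxgy : x = g y := by
    rcases Finset.mem_insert.mp hx' with h | h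
    · exact h
    · exact absurd h hxt
  have hy' : y ∈ insert (g x) s := by
    rw [← eOf_insert hg hs hx, heq]; exact Finset.mem_union_left _ hy
  have hygx : y = g x := by
    rcases Finset.mem_insert.mp hy' with h | h
    · exact h
    · exact absurd h hys
  -- x and g x form a 2-cycle, so x never reaches r
  have hcyc : g (g x) = x := by rw [← hygx, ← hxgy]
  have hiter : ∀ n, g^[n] x = x ∨ g^[n] x = g x := by
    intro n
    induction n with
    | zero => exact Or.inl rfl
    | succ n ih =>
      rw [Function.iterate_succ_apply']
      rcases ih with h | h
      · rw [h]; exact Or.inr rfl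
      · rw [h, hcyc]; exact Or.inl rfl
  obtain ⟨hxV, hxr⟩ := mem_part_ne_root hP hs hx
  have hgxr : g x ≠ r := by
    rw [← hygx]; exact (mem_part_ne_root hP ht hy).2
  obtain ⟨k, hk⟩ := hg.2.2.2.2 x hxV
  rcases hiter k with h | h
  · rw [hk] at h; exact hxr h.symm
  · rw [hk] at h; exact hgxr h.symm

end Forward
def Phi (g : ℕ → ℕ) (P : Finset (Finset ℕ)) : Finset (Finset ℕ) := P.image (eOf g)

section PhiTree

variable {V : Finset ℕ} {r : ℕ} {P : Finset (Finset ℕ)} {g : ℕ → ℕ}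
  {s : Finset ℕ} {v w x : ℕ}

lemma hadj_of_part (hg : Admissible V r P g) (hP : IsPartitionOf (V.erase r) P)
    (hs : s ∈ P) (hx : x ∈ s) : HAdj (Phi g P) (g x) x := by
  refine ⟨g_ne_self hg (mem_part_ne_root hP hs hx).1 (mem_part_ne_root hP hs hx).2,
    eOf g s,
    Finset.mem_image_of_mem _ hs, ?_, Finset.mem_union_left _ hx⟩
  exact Finset.mem_union_right _ (Finset.mem_image_of_mem g hx)

lemma phi_connected_aux (hg : Admissible V r P g)
    (hP : IsPartitionOf (V.erase r) P) :
    ∀ n v, v ∈ V → steps g r v = n → Relation.ReflTransGen (HAdj (Phi g P)) v r := by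
  intro n
  induction n using Nat.strong_induction_on with
  | _ n ih =>
    intro v hv hn
    rcases mem_V_cases hP hv with rfl | ⟨s, hs, hvs⟩
    · exact Relation.ReflTransGen.refl
    · obtain ⟨hvV, hvr⟩ := mem_part_ne_root hP hs hvs
      have hstep := steps_succ hg hvV hvr
      have hgv : g v ∈ V := hg.2.1 v hv
      exact Relation.ReflTransGen.head (hadj_symm (hadj_of_part hg hP hs hvs))
        (ih (steps g r (g v)) (by omega) (g v) hgv rfl)

lemma phi_connected (hg : Admissible V r P g)
    (hP : IsPartitionOf (V.erase r) P) : HConnected V (Phi g P) := by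
  intro v hv w hw
  have h1 := phi_connected_aux hg hP (steps g r v) v hv rfl
  have h2 := phi_connected_aux hg hP (steps g r w) w hw rfl
  exact h1.trans (haveI : Std.Symm (HAdj (Phi g P)) := ⟨fun _ _ => hadj_symm⟩
    Relation.ReflTransGen.symmetric.symm _ _ h2)

lemma phi_hypertree (hg : Admissible V r P g) (hr : r ∈ V)
    (hP : IsPartitionOf (V.erase r) P) : IsHypertree V (Phi g P) := by
  refine ⟨?_, phi_connected hg hP, ?_⟩
  · intro e he
    obtain ⟨s, hs, rfl⟩ := Finset.mem_image.mp he
    obtain ⟨x, hx⟩ := hP.1 s hs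
    refine ⟨eOf_subset_V hg hP hs, ?_⟩
    rw [eOf_card hg hP hs hx]
    have : 1 ≤ s.card := Finset.card_pos.mpr ⟨x, hx⟩
    omega
  · have hinj := eOf_inj hg hP
    have hcard : (Phi g P).card = P.card := Finset.card_image_of_injOn
      fun a ha b hb h => hinj a ha b hb h
    have hsum : ∑ e ∈ Phi g P, e.card = ∑ s ∈ P, (eOf g s).card :=
      Finset.sum_image hinj
    have hsum2 : ∑ s ∈ P, (eOf g s).card = (∑ s ∈ P, s.card) + P.card := by
      have : ∀ s ∈ P, (eOf g s).card = s.card + 1 := by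
        intro s hs
        obtain ⟨x, hx⟩ := hP.1 s hs
        exact eOf_card hg hP hs hx
      rw [Finset.sum_congr rfl this, Finset.sum_add_distrib, Finset.sum_const,
        smul_eq_mul, mul_one]
    have hsum3 : ∑ s ∈ P, s.card = (V.erase r).card := by
      rw [← hP.2.2, Finset.card_biUnion]
      · simp
      · intro a ha b hb hab
        exact hP.2.1 a ha b hb hab
    have h4 : (V.erase r).card = V.card - 1 := Finset.card_erase_of_mem hr
    have h5 : 1 ≤ V.card := Finset.card_pos.mpr ⟨r, hr⟩
    omega

lemma edge_steps (hg : Admissible V r P g) (hP : IsPartitionOf (V.erase r) P)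
    (hs : s ∈ P) (hx : x ∈ s) (hw : w ∈ eOf g s) :
    w = g x ∨ steps g r w = steps g r (g x) + 1 := by
  rcases Finset.mem_union.mp hw with hw | hw
  · right
    obtain ⟨hwV, hwr⟩ := mem_part_ne_root hP hs hw
    rw [hg.2.2.2.1 s hs x hx w hw, steps_succ hg hwV hwr]
  · obtain ⟨z, hz, rfl⟩ := Finset.mem_image.mp hw
    exact Or.inl (hg.2.2.2.1 s hs z hz x hx)

lemma hadj_steps (hg : Admissible V r P g) (hP : IsPartitionOf (V.erase r) P)
    (h : HAdj (Phi g P) v w) : steps g r w ≤ steps g r v + 1 := by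
  obtain ⟨-, e, he, hv, hw⟩ := h
  obtain ⟨s, hs, rfl⟩ := Finset.mem_image.mp he
  obtain ⟨x, hx⟩ := hP.1 s hs
  rcases edge_steps hg hP hs hx hv with h1 | h1 <;>
    rcases edge_steps hg hP hs hx hw with h2 | h2 <;> subst_vars <;> omega

lemma hjoined_steps_le (hg : Admissible V r P g)
    (hP : IsPartitionOf (V.erase r) P) {l : ℕ}
    (h : HJoined (Phi g P) l r v) : steps g r v ≤ l := by
  induction l generalizing v with
  | zero =>
    obtain ⟨p, h0, hl, -⟩ := h
    rw [← hl, h0, steps_root hg]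
  | succ l ih =>
    obtain ⟨p, h0, hl, hstep⟩ := h
    have h1 : steps g r (p l) ≤ l := ih ⟨p, h0, rfl, fun i hi => hstep i (by omega)⟩
    have h2 := hadj_steps hg hP (hstep l (by omega))
    rw [hl] at h2
    omega

lemma steps_iterate (hg : Admissible V r P g) (hv : v ∈ V) :
    ∀ j ≤ steps g r v, g^[j] v ∈ V ∧ steps g r (g^[j] v) = steps g r v - j := by
  intro j
  induction j with
  | zero => intro _; exact ⟨hv, by simp⟩
  | succ j ih =>
    intro hj
    obtain ⟨haV, hasteps⟩ := ih (by omega)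
    have har : g^[j] v ≠ r := by
      intro h
      rw [h, steps_root hg] at hasteps
      omega
    rw [Function.iterate_succ_apply']
    refine ⟨hg.2.1 _ haV, ?_⟩
    have := steps_succ hg haV har
    omega

lemma hjoined_steps (hg : Admissible V r P g) (hP : IsPartitionOf (V.erase r) P)
    (hv : v ∈ V) : HJoined (Phi g P) (steps g r v) r v := by
  set k := steps g r v with hk
  refine ⟨fun i => g^[k - i] v, ?_, by simp, ?_⟩
  · simp only [Nat.sub_zero]
    exact steps_spec hg hv
  · intro i hi
    show HAdj (Phi g P) (g^[k - i] v) (g^[k - (i + 1)] v)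
    obtain ⟨haV, hasteps⟩ := steps_iterate hg hv (k - i - 1) (by omega)
    have har : g^[k - i - 1] v ≠ r := by
      intro h
      rw [h, steps_root hg] at hasteps
      omega
    have hga : g^[k - i] v = g (g^[k - i - 1] v) := by
      have h1 : k - i = (k - i - 1) + 1 := by omega
      conv_lhs => rw [h1]
      rw [Function.iterate_succ_apply']
    have hii : k - (i + 1) = k - i - 1 := by omega
    rw [hii, hga]
    rcases mem_V_cases hP haV with h | ⟨s, hs, has⟩
    · exact absurd h har
    · exact hadj_of_part hg hP hs has

lemma phi_hdist (hg : Admissible V r P g) (hP : IsPartitionOf (V.erase r) P)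
    (hv : v ∈ V) : hdist (Phi g P) r v = steps g r v := by
  apply le_antisymm (hdist_le (hjoined_steps hg hP hv))
  exact hjoined_steps_le hg hP (hjoined_hdist ⟨_, hjoined_steps hg hP hv⟩)

lemma phi_isMarked (hg : Admissible V r P g) (hP : IsPartitionOf (V.erase r) P)
    (hs : s ∈ P) (hx : x ∈ s) : IsMarked (Phi g P) r (eOf g s) (g x) := by
  refine ⟨Finset.mem_union_right _ (Finset.mem_image_of_mem g hx), ?_⟩
  intro w hw
  have hwV : w ∈ V := eOf_subset_V hg hP hs hw
  have hgxV : g x ∈ V := hg.2.1 x (mem_part_ne_root hP hs hx).1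
  rw [phi_hdist hg hP hwV, phi_hdist hg hP hgxV]
  rcases edge_steps hg hP hs hx hw with h | h
  · rw [h]
  · omega

lemma phi_markOf (hg : Admissible V r P g) (hr : r ∈ V)
    (hP : IsPartitionOf (V.erase r) P) (hs : s ∈ P) (hx : x ∈ s) :
    markOf (Phi g P) r (eOf g s) = g x := by
  have hm : ∀ e ∈ Phi g P, IsMarked (Phi g P) r e (markOf (Phi g P) r e) := by
    intro e he
    obtain ⟨t, ht, rfl⟩ := Finset.mem_image.mp he
    obtain ⟨y, hy⟩ := hP.1 t ht
    exact markOf_isMarked ⟨y, Finset.mem_union_left _ hy⟩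
  exact (marked_uniq (phi_hypertree hg hr hP) hr hm
    (Finset.mem_image_of_mem _ hs) (phi_isMarked hg hP hs hx)).symm

lemma phi_prufer (hg : Admissible V r P g) (hr : r ∈ V)
    (hP : IsPartitionOf (V.erase r) P) :
    HasPruferPartition V r (Phi g P) P := by
  refine ⟨phi_hypertree hg hr hP, markOf (Phi g P) r, ?_, ?_, ?_⟩
  · intro e he
    obtain ⟨t, ht, rfl⟩ := Finset.mem_image.mp he
    obtain ⟨y, hy⟩ := hP.1 t ht
    exact markOf_isMarked ⟨y, Finset.mem_union_left _ hy⟩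
  · have key : ∀ t ∈ P, (eOf g t).erase (markOf (Phi g P) r (eOf g t)) = t := by
      intro t ht
      obtain ⟨y, hy⟩ := hP.1 t ht
      rw [phi_markOf hg hr hP ht hy, reduce_eOf hg hP ht hy]
    ext u
    constructor
    · intro hu
      exact Finset.mem_image.mpr ⟨eOf g u, Finset.mem_image_of_mem _ hu, key u hu⟩
    · intro hu
      obtain ⟨e, he, rfl⟩ := Finset.mem_image.mp hu
      obtain ⟨t, ht, rfl⟩ := Finset.mem_image.mp he
      rw [key t ht]
      exact ht
  · intro e he e' he' heq
    obtain ⟨t, ht, rfl⟩ := Finset.mem_image.mp (Finset.mem_coe.mp he)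
    obtain ⟨t', ht', rfl⟩ := Finset.mem_image.mp (Finset.mem_coe.mp he')
    obtain ⟨y, hy⟩ := hP.1 t ht
    obtain ⟨y', hy'⟩ := hP.1 t' ht'
    have h1 : t = t' := by
      have e1 : (eOf g t).erase (markOf (Phi g P) r (eOf g t)) = t := by
        rw [phi_markOf hg hr hP ht hy, reduce_eOf hg hP ht hy]
      have e2 : (eOf g t').erase (markOf (Phi g P) r (eOf g t')) = t' := by
        rw [phi_markOf hg hr hP ht' hy', reduce_eOf hg hP ht' hy']
      rw [← e1, ← e2]
      exact heq
    rw [h1]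

lemma phi_glue (hg : Admissible V r P g) (hr : r ∈ V)
    (hP : IsPartitionOf (V.erase r) P) : GlueRel (Phi g P) r g := by
  refine ⟨markOf (Phi g P) r, ?_, ?_⟩
  · intro e he
    obtain ⟨t, ht, rfl⟩ := Finset.mem_image.mp he
    obtain ⟨y, hy⟩ := hP.1 t ht
    exact markOf_isMarked ⟨y, Finset.mem_union_left _ hy⟩
  · intro e he v hv
    obtain ⟨t, ht, rfl⟩ := Finset.mem_image.mp he
    obtain ⟨y, hy⟩ := hP.1 t ht
    rw [phi_markOf hg hr hP ht hy] at hv ⊢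
    rw [reduce_eOf hg hP ht hy] at hv
    exact hg.2.2.2.1 t ht v hv y hy

end PhiTree
noncomputable def Psi (E : Finset (Finset ℕ)) (r : ℕ) : ℕ → ℕ := fun v =>
  if h : ∃ e, e ∈ E ∧ v ∈ e.erase (markOf E r e) then markOf E r h.choose else v

section Inverse

variable {V : Finset ℕ} {r : ℕ} {P : Finset (Finset ℕ)} {E : Finset (Finset ℕ)}
  {e s : Finset ℕ} {v w : ℕ}

lemma prufer_markOf (hE : HasPruferPartition V r E P) (hr : r ∈ V) :
    ∀ e ∈ E, IsMarked E r e (markOf E r e) := by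
  obtain ⟨hT, m, hm, -, -⟩ := hE
  intro e he
  have hne : e.Nonempty := ⟨m e, (hm e he).1⟩
  exact markOf_isMarked hne

lemma prufer_P_eq (hE : HasPruferPartition V r E P) (hr : r ∈ V) :
    P = E.image fun e => e.erase (markOf E r e) := by
  obtain ⟨hT, m, hm, hPim, -⟩ := hE
  rw [hPim]
  apply Finset.image_congr
  intro e he
  have he' : e ∈ E := Finset.mem_coe.mp he
  have := marked_uniq hT hr hm he' (markOf_isMarked ⟨m e, (hm e he').1⟩)
  simp only [this]

lemma psi_spec (hT : IsHypertree V E) (hr : r ∈ V)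
    (hm : ∀ e ∈ E, IsMarked E r e (markOf E r e)) (he : e ∈ E)
    (hv : v ∈ e.erase (markOf E r e)) : Psi E r v = markOf E r e := by
  have h : ∃ e, e ∈ E ∧ v ∈ e.erase (markOf E r e) := ⟨e, he, hv⟩
  rw [Psi, dif_pos h]
  obtain ⟨hce, hcv⟩ := h.choose_spec
  rw [reduce_unique hT hr hm hce he hcv hv]

lemma psi_fix (hT : IsHypertree V E) (hr : r ∈ V)
    (hm : ∀ e ∈ E, IsMarked E r e (markOf E r e))
    (hv : v ∉ V.erase r) : Psi E r v = v := by
  rw [Psi, dif_neg]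
  rintro ⟨e, he, hve⟩
  exact hv (reduce_subset hT hr hm e he hve)

lemma psi_admissible (hE : HasPruferPartition V r E P) (hr : r ∈ V)
    (hP : IsPartitionOf (V.erase r) P) : Admissible V r P (Psi E r) := by
  have hT := hE.1
  have hm := prufer_markOf hE hr
  have hPim := prufer_P_eq hE hr
  refine ⟨psi_fix hT hr hm (by simp), ?_, ?_, ?_, ?_⟩
  · -- maps V to V
    intro v hv
    by_cases h : v ∈ V.erase r
    · obtain ⟨e, he, hve⟩ := reduce_cover hT hr hm v h
      rw [psi_spec hT hr hm he hve]
      exact (hT.1 e he).1 (hm e he).1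
    · rw [psi_fix hT hr hm h]; exact hv
  · -- identity outside V
    intro v hv
    exact psi_fix hT hr hm fun h => hv (Finset.mem_erase.mp h).2
  · -- constant on parts
    intro s hs v hv w hw
    rw [hPim] at hs
    obtain ⟨e, he, rfl⟩ := Finset.mem_image.mp hs
    rw [psi_spec hT hr hm he hv, psi_spec hT hr hm he hw]
  · -- termination
    intro v hv
    have main : ∀ n, ∀ v ∈ V, hdist E r v = n → ∃ k, (Psi E r)^[k] v = r := by
      intro n
      induction n using Nat.strong_induction_on with
      | _ n ih =>
        intro v hv hn
        by_cases hvr : v = r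
        · exact ⟨0, hvr⟩
        · obtain ⟨e, he, hve⟩ := reduce_cover hT hr hm v
            (Finset.mem_erase.mpr ⟨hvr, hv⟩)
          have hlt := marked_strict hT hr hm he hve
          have hmV : markOf E r e ∈ V := (hT.1 e he).1 (hm e he).1
          obtain ⟨k, hk⟩ := ih (hdist E r (markOf E r e)) (by omega) _ hmV rfl
          refine ⟨k + 1, ?_⟩
          rw [Function.iterate_succ_apply, psi_spec hT hr hm he hve, hk]
    exact main (hdist E r v) v hv rfl

lemma psi_right_inv (hE : HasPruferPartition V r E P) (hr : r ∈ V)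
    (hP : IsPartitionOf (V.erase r) P) : Phi (Psi E r) P = E := by
  have hT := hE.1
  have hm := prufer_markOf hE hr
  have hPim := prufer_P_eq hE hr
  have key : ∀ e ∈ E, eOf (Psi E r) (e.erase (markOf E r e)) = e := by
    intro e he
    have h2 : 2 ≤ e.card := (hT.1 e he).2
    have hne : (e.erase (markOf E r e)).Nonempty := by
      rw [← Finset.card_pos, Finset.card_erase_of_mem (hm e he).1]
      omega
    have heq : eOf (Psi E r) (e.erase (markOf E r e))
        = insert (markOf E r e) (e.erase (markOf E r e)) := by
      ext y
      simp only [eOf, Finset.mem_union, Finset.mem_image, Finset.mem_insert]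
      constructor
      · rintro (hy | ⟨z, hz, rfl⟩)
        · exact Or.inr hy
        · exact Or.inl (psi_spec hT hr hm he hz)
      · rintro (rfl | hy)
        · obtain ⟨z, hz⟩ := hne
          exact Or.inr ⟨z, hz, psi_spec hT hr hm he hz⟩
        · exact Or.inl hy
    rw [heq, Finset.insert_erase (hm e he).1]
  ext u
  constructor
  · intro hu
    obtain ⟨s, hs, rfl⟩ := Finset.mem_image.mp hu
    rw [hPim] at hs
    obtain ⟨e, he, rfl⟩ := Finset.mem_image.mp hs
    rw [key e he]
    exact he
  · intro hu
    refine Finset.mem_image.mpr ⟨u.erase (markOf E r u), ?_, key u hu⟩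
    rw [hPim]
    exact Finset.mem_image_of_mem _ hu

lemma phi_markOf_isMarked {g : ℕ → ℕ} (hg : Admissible V r P g)
    (hP : IsPartitionOf (V.erase r) P) :
    ∀ e ∈ Phi g P, IsMarked (Phi g P) r e (markOf (Phi g P) r e) := by
  intro e he
  obtain ⟨t, ht, rfl⟩ := Finset.mem_image.mp he
  obtain ⟨y, hy⟩ := hP.1 t ht
  exact markOf_isMarked ⟨y, Finset.mem_union_left _ hy⟩

lemma psi_left_inv {g : ℕ → ℕ} (hg : Admissible V r P g) (hr : r ∈ V)
    (hP : IsPartitionOf (V.erase r) P) : Psi (Phi g P) r = g := by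
  have hT := phi_hypertree hg hr hP
  have hm := phi_markOf_isMarked hg hP
  funext v
  by_cases hv : v ∈ V.erase r
  · obtain ⟨hvr, hvV⟩ := Finset.mem_erase.mp hv
    rcases mem_V_cases hP hvV with h | ⟨s, hs, hvs⟩
    · exact absurd h hvr
    · have hmk := phi_markOf hg hr hP hs hvs
      have hred : v ∈ (eOf g s).erase (markOf (Phi g P) r (eOf g s)) := by
        rw [hmk, reduce_eOf hg hP hs hvs]
        exact hvs
      rw [psi_spec hT hr hm (Finset.mem_image_of_mem _ hs) hred, hmk]
  · rw [psi_fix hT hr hm hv]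
    by_cases hvV : v ∈ V
    · have : v = r := by
        by_contra h
        exact hv (Finset.mem_erase.mpr ⟨h, hvV⟩)
      rw [this, hg.1]
    · rw [hg.2.2.1 v hvV]

end Inverse


/-- `P`-admissible maps are in one-to-one correspondence with
`r`-rooted hypertrees having vertex set `V` and Prüfer partition `P`, the
correspondence associating to each admissible map the hypertree having it as
glue map. -/
theorem stmt12 (V : Finset ℕ) (r : ℕ) (hr : r ∈ V)
    (P : Finset (Finset ℕ)) (hP : IsPartitionOf (V.erase r) P) :
    ∃ Φ : {g : ℕ → ℕ // Admissible V r P g} ≃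
          {E : Finset (Finset ℕ) // HasPruferPartition V r E P},
      ∀ g : {g : ℕ → ℕ // Admissible V r P g}, GlueRel (Φ g).1 r g.1 := by
  refine ⟨{
    toFun := fun g => ⟨Phi g.1 P, phi_prufer g.2 hr hP⟩
    invFun := fun E => ⟨Psi E.1 r, psi_admissible E.2 hr hP⟩
    left_inv := fun g => Subtype.ext (psi_left_inv g.2 hr hP)
    right_inv := fun E => Subtype.ext (psi_right_inv E.2 hr hP) },
    fun g => phi_glue g.2 hr hP⟩
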